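/- Let G = G(Γ, 𝔭) be a graph product of cyclic groups in which the range of 𝔭 is finite, say {c₁, …, c_t}, and let p be a prime such that p > c_i for every c_i ≠ ∞. Then for every g ∈ G, the support of g is contained in the support of g^p, i.e., sp(g) ⊆ sp(g^p). -/

import Mathlib

def graphProdRels {V : Type} (Γ : SimpleGraph V) (𝔭 : V → ℕ) : Set (FreeGroup V) :=
  {w | (∃ v, 𝔭 v ≠ 0 ∧ w = FreeGroup.of v ^ 𝔭 v) ∨
       (∃ a b, Γ.Adj a b ∧
         w = FreeGroup.of a * FreeGroup.of b * (FreeGroup.of a)⁻¹ * (FreeGroup.of b)⁻¹)}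

def GraphProduct {V : Type} (Γ : SimpleGraph V) (𝔭 : V → ℕ) : Type :=
  PresentedGroup (graphProdRels Γ 𝔭)

instance {V : Type} (Γ : SimpleGraph V) (𝔭 : V → ℕ) : Group (GraphProduct Γ 𝔭) := by
  unfold GraphProduct; infer_instance

def GraphProduct.of {V : Type} {Γ : SimpleGraph V} {𝔭 : V → ℕ} (v : V) : GraphProduct Γ 𝔭 :=
  PresentedGroup.of v

/-- The support of an element of a graph product: the smallest set of vertices `A` such that
`g` lies in the subgroup generated by the generators from `A`. -/
def GraphProduct.sp {V : Type} {Γ : SimpleGraph V} {𝔭 : V → ℕ} (g : GraphProduct Γ 𝔭) : Set V :=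
  {v | ∀ A : Set V, g ∈ Subgroup.closure (GraphProduct.of '' A) → v ∈ A}

namespace GPaux

open Classical

variable {V : Type} (Γ : SimpleGraph V) (𝔭 : V → ℕ)

local notation "G" => GraphProduct Γ 𝔭

theorem mk_rel {r : FreeGroup V} (h : r ∈ graphProdRels Γ 𝔭) :
    (PresentedGroup.mk (graphProdRels Γ 𝔭) r : G) = 1 := by
  rw [show (PresentedGroup.mk (graphProdRels Γ 𝔭) r : G) = QuotientGroup.mk r from rfl]
  exact (QuotientGroup.eq_one_iff (N := Subgroup.normalClosure (graphProdRels Γ 𝔭)) r).mpr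
    (Subgroup.subset_normalClosure h)

theorem of_pow_rel (v : V) (h : 𝔭 v ≠ 0) :
    (GraphProduct.of v : G) ^ (𝔭 v) = 1 := by
  have := mk_rel Γ 𝔭 (Or.inl ⟨v, h, rfl⟩)
  rw [map_pow] at this
  exact this

theorem of_comm {a b : V} (h : Γ.Adj a b) :
    Commute (GraphProduct.of a : G) (GraphProduct.of b) := by
  have := mk_rel Γ 𝔭 (Or.inr ⟨a, b, h, rfl⟩)
  simp only [map_mul, map_inv] at this
  have h2 : (GraphProduct.of a : G) * GraphProduct.of b *
      (GraphProduct.of a)⁻¹ * (GraphProduct.of b)⁻¹ = 1 := this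
  have h3 : (GraphProduct.of a : G) * GraphProduct.of b =
      GraphProduct.of b * GraphProduct.of a := by
    have h4 := mul_eq_one_iff_eq_inv.mp h2
    rw [inv_inv] at h4
    calc (GraphProduct.of a : G) * GraphProduct.of b
        = (GraphProduct.of a * GraphProduct.of b * (GraphProduct.of a)⁻¹) * GraphProduct.of a := by
          group
      _ = GraphProduct.of b * GraphProduct.of a := by rw [h4]
  exact h3

/-- the power map `ZMod (𝔭 v) → G`, `e ↦ of v ^ e`. -/
noncomputable def pw (v : V) : ZMod (𝔭 v) → G := fun e =>
  Additive.toMul (ZMod.lift (𝔭 v)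
    ⟨(zmultiplesHom (Additive G)) (Additive.ofMul (GraphProduct.of v : G)), by
      simp only [zmultiplesHom_apply]
      rcases eq_or_ne (𝔭 v) 0 with h | h
      · simp [h]
      · have h1 := of_pow_rel Γ 𝔭 v h
        show ((𝔭 v : ℤ) • Additive.ofMul (GraphProduct.of v : G)) = 0
        rw [← ofMul_zpow, zpow_natCast, h1]
        rfl⟩ e)

theorem pw_add (v : V) (e f : ZMod (𝔭 v)) : pw Γ 𝔭 v (e + f) = pw Γ 𝔭 v e * pw Γ 𝔭 v f := by
  unfold pw
  rw [map_add]
  rfl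

theorem pw_zero (v : V) : pw Γ 𝔭 v 0 = 1 := by
  unfold pw; rw [map_zero]; rfl

theorem pw_intCast (v : V) (m : ℤ) : pw Γ 𝔭 v ((m : ZMod (𝔭 v))) = (GraphProduct.of v : G) ^ m := by
  unfold pw
  rw [ZMod.lift_coe]
  rfl

theorem pw_eq_zpow (v : V) (e : ZMod (𝔭 v)) :
    pw Γ 𝔭 v e = (GraphProduct.of v : G) ^ (ZMod.cast e : ℤ) := by
  conv_lhs => rw [← ZMod.intCast_zmod_cast e]
  exact pw_intCast Γ 𝔭 v _

theorem pw_one' (v : V) : pw Γ 𝔭 v 1 = GraphProduct.of v := by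
  have : ((1 : ℤ) : ZMod (𝔭 v)) = 1 := by push_cast; rfl
  rw [← this, pw_intCast, zpow_one]

theorem pw_comm {a b : V} (h : Γ.Adj a b) (x : ZMod (𝔭 a)) (y : ZMod (𝔭 b)) :
    Commute (pw Γ 𝔭 a x) (pw Γ 𝔭 b y) := by
  rw [pw_eq_zpow, pw_eq_zpow]
  exact (of_comm Γ 𝔭 h).zpow_zpow _ _

theorem pw_self_comm (v : V) (x y : ZMod (𝔭 v)) :
    Commute (pw Γ 𝔭 v x) (pw Γ 𝔭 v y) := by
  rw [pw_eq_zpow, pw_eq_zpow]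
  exact (Commute.refl _).zpow_zpow _ _

theorem pw_pow (v : V) (e : ZMod (𝔭 v)) (k : ℕ) :
    (pw Γ 𝔭 v e) ^ k = pw Γ 𝔭 v ((k : ZMod (𝔭 v)) * e) := by
  induction k with
  | zero => simp [pw_zero]
  | succ k ih =>
    rw [pow_succ, ih, ← pw_add]
    congr 1
    push_cast
    ring

theorem pw_mem_closure {A : Set V} {v : V} (hv : v ∈ A) (e : ZMod (𝔭 v)) :
    pw Γ 𝔭 v e ∈ Subgroup.closure (GraphProduct.of '' A : Set G) := by
  rw [pw_eq_zpow]
  exact Subgroup.zpow_mem _ (Subgroup.subset_closure (Set.mem_image_of_mem _ hv)) _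


/-! ## Words and combinatorics -/

abbrev Syl (𝔭 : V → ℕ) : Type := Σ v : V, ZMod (𝔭 v)

abbrev Word (𝔭 : V → ℕ) : Type := List (Syl 𝔭)

variable {𝔭}

/-- set of vertices occurring in a word -/
def lets (w : Word 𝔭) : Set V := {u | ∃ s ∈ w, Sigma.fst s = u}

def Valid (w : Word 𝔭) : Prop := ∀ s ∈ w, s.2 ≠ 0

def AllAdj (v : V) (w : Word 𝔭) : Prop := ∀ s ∈ w, Γ.Adj s.1 v

/-- `v` has a letter that can be shuffled to the front -/
def CanPull (v : V) : Word 𝔭 → Prop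
  | [] => False
  | s :: t => s.1 = v ∨ (Γ.Adj s.1 v ∧ CanPull v t)

/-- `v` has a letter that can be shuffled to the back -/
def BClear (v : V) (w : Word 𝔭) : Prop :=
  ∃ (w₁ : Word 𝔭) (e : ZMod (𝔭 v)) (w₂ : Word 𝔭), w = w₁ ++ ⟨v, e⟩ :: w₂ ∧ AllAdj Γ v w₂

def Reduced : Word 𝔭 → Prop
  | [] => True
  | s :: t => ¬ CanPull Γ s.1 t ∧ Reduced t

/-- elementary shuffle -/
inductive Step : Word 𝔭 → Word 𝔭 → Prop
  | swap (a b : Syl 𝔭) (t : Word 𝔭) (h : Γ.Adj a.1 b.1) : Step (a :: b :: t) (b :: a :: t)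
  | cons (s : Syl 𝔭) {t t' : Word 𝔭} (h : Step t t') : Step (s :: t) (s :: t')

def Weq : Word 𝔭 → Word 𝔭 → Prop := Relation.EqvGen (Step Γ)

section lemmas

variable {Γ}

theorem Weq.refl (w : Word 𝔭) : Weq Γ w w := Relation.EqvGen.refl w

theorem Weq.symm {w w' : Word 𝔭} (h : Weq Γ w w') : Weq Γ w' w :=
  Relation.EqvGen.symm _ _ h

theorem Weq.trans {w₁ w₂ w₃ : Word 𝔭} (h : Weq Γ w₁ w₂) (h' : Weq Γ w₂ w₃) :
    Weq Γ w₁ w₃ := Relation.EqvGen.trans _ _ _ h h'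

theorem Step.weq {w w' : Word 𝔭} (h : Step Γ w w') : Weq Γ w w' :=
  Relation.EqvGen.rel _ _ h

theorem Weq.cons (s : Syl 𝔭) {t t' : Word 𝔭} (h : Weq Γ t t') :
    Weq Γ (s :: t) (s :: t') := by
  induction h with
  | rel x y hxy => exact (Step.cons s hxy).weq
  | refl x => exact Weq.refl _
  | symm x y _ ih => exact ih.symm
  | trans x y z _ _ ih ih' => exact ih.trans ih'

theorem Weq.append_left (u : Word 𝔭) {t t' : Word 𝔭} (h : Weq Γ t t') :
    Weq Γ (u ++ t) (u ++ t') := by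
  induction u with
  | nil => exact h
  | cons a u ih => exact ih.cons a

theorem Step.append_right {t t' : Word 𝔭} (h : Step Γ t t') (u : Word 𝔭) :
    Step Γ (t ++ u) (t' ++ u) := by
  induction h with
  | swap a b s hadj => exact Step.swap a b (s ++ u) hadj
  | cons s _ ih => exact Step.cons s ih

theorem Weq.append_right {t t' : Word 𝔭} (h : Weq Γ t t') (u : Word 𝔭) :
    Weq Γ (t ++ u) (t' ++ u) := by
  induction h with
  | rel x y hxy => exact (hxy.append_right u).weq
  | refl x => exact Weq.refl _
  | symm x y _ ih => exact ih.symm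
  | trans x y z _ _ ih ih' => exact ih.trans ih'

@[simp] theorem canPull_nil (v : V) : ¬ CanPull Γ v ([] : Word 𝔭) := fun h => h

theorem canPull_cons (v : V) (s : Syl 𝔭) (t : Word 𝔭) :
    CanPull Γ v (s :: t) ↔ s.1 = v ∨ (Γ.Adj s.1 v ∧ CanPull Γ v t) := Iff.rfl

theorem canPull_append {v : V} {X Y : Word 𝔭} :
    CanPull Γ v (X ++ Y) ↔ CanPull Γ v X ∨ (AllAdj Γ v X ∧ CanPull Γ v Y) := by
  induction X with
  | nil => simp [AllAdj, CanPull]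
  | cons a X ih =>
    simp only [List.cons_append, canPull_cons, ih, AllAdj, List.mem_cons]
    constructor
    · rintro (h | ⟨ha, (h | ⟨h1, h2⟩)⟩)
      · exact Or.inl (Or.inl h)
      · exact Or.inl (Or.inr ⟨ha, h⟩)
      · exact Or.inr ⟨fun s hs => by rcases hs with rfl | hs; exacts [ha, h1 s hs], h2⟩
    · rintro ((h | ⟨ha, h⟩) | ⟨h1, h2⟩)
      · exact Or.inl h
      · exact Or.inr ⟨ha, Or.inl h⟩
      · exact Or.inr ⟨h1 a (Or.inl rfl), Or.inr ⟨fun s hs => h1 s (Or.inr hs), h2⟩⟩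

theorem canPull_mem {v : V} {w : Word 𝔭} (h : CanPull Γ v w) : v ∈ lets w := by
  induction w with
  | nil => exact absurd h (canPull_nil v)
  | cons s t ih =>
    rcases h with h | ⟨_, h⟩
    · exact ⟨s, List.mem_cons_self, h⟩
    · obtain ⟨x, hx, hx'⟩ := ih h
      exact ⟨x, List.mem_cons_of_mem _ hx, hx'⟩

theorem allAdj_not_mem {v : V} {w : Word 𝔭} (h : AllAdj Γ v w) : v ∉ lets w := by
  rintro ⟨s, hs, rfl⟩
  exact Γ.irrefl (h s hs)

theorem not_canPull_of_not_mem {v : V} {w : Word 𝔭} (h : v ∉ lets w) : ¬ CanPull Γ v w :=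
  fun hc => h (canPull_mem hc)

theorem not_allAdj_exists {v : V} {w : Word 𝔭} (h : ¬ AllAdj Γ v w) :
    ∃ s ∈ w, ¬ Γ.Adj s.1 v := by
  by_contra hc
  push_neg at hc
  exact h hc

@[simp] theorem reduced_nil : Reduced Γ ([] : Word 𝔭) := trivial

theorem reduced_cons {s : Syl 𝔭} {t : Word 𝔭} :
    Reduced Γ (s :: t) ↔ ¬ CanPull Γ s.1 t ∧ Reduced Γ t := Iff.rfl

theorem bclear_cons {v : V} {s : Syl 𝔭} {X : Word 𝔭} :
    BClear Γ v (s :: X) ↔ (s.1 = v ∧ AllAdj Γ v X) ∨ BClear Γ v X := by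
  constructor
  · rintro ⟨w₁, e, w₂, heq, hall⟩
    cases w₁ with
    | nil =>
      simp only [List.nil_append, List.cons.injEq] at heq
      obtain ⟨rfl, rfl⟩ := heq
      exact Or.inl ⟨rfl, hall⟩
    | cons a w₁ =>
      simp only [List.cons_append, List.cons.injEq] at heq
      exact Or.inr ⟨w₁, e, w₂, heq.2, hall⟩
  · rintro (⟨h1, h2⟩ | ⟨w₁, e, w₂, heq, hall⟩)
    · obtain ⟨u, e⟩ := s
      cases h1
      exact ⟨[], e, X, rfl, h2⟩
    · exact ⟨s :: w₁, e, w₂, by rw [heq]; rfl, hall⟩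

theorem bclear_not_nil {v : V} : ¬ BClear Γ v ([] : Word 𝔭) := by
  rintro ⟨w₁, e, w₂, heq, -⟩
  exact (List.cons_ne_nil _ _) (List.append_eq_nil_iff.mp heq.symm).2

/-- characterization of reducedness of an append -/
theorem reduced_append {X Y : Word 𝔭} :
    Reduced Γ (X ++ Y) ↔ Reduced Γ X ∧ Reduced Γ Y ∧
      (∀ v, BClear Γ v X → ¬ CanPull Γ v Y) := by
  induction X with
  | nil =>
    simp only [List.nil_append, reduced_nil, true_and]
    exact ⟨fun h => ⟨h, fun v hb => absurd hb bclear_not_nil⟩, fun h => h.1⟩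
  | cons a X ih =>
    simp only [List.cons_append, reduced_cons, ih, canPull_append]
    constructor
    · rintro ⟨h1, h2, h3, h4⟩
      push_neg at h1
      refine ⟨⟨h1.1, h2⟩, h3, fun v hb => ?_⟩
      rcases (bclear_cons).mp hb with ⟨rfl, hall⟩ | hb'
      · exact fun hc => (h1.2 hall hc)
      · exact h4 v hb'
    · rintro ⟨⟨h1, h2⟩, h3, h4⟩
      refine ⟨?_, h2, h3, fun v hb => h4 v (bclear_cons.mpr (Or.inr hb))⟩
      rintro (hc | ⟨hall, hc⟩)
      · exact h1 hc
      · exact h4 a.1 (bclear_cons.mpr (Or.inl ⟨rfl, hall⟩)) hc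

theorem reduced_append_left {X Y : Word 𝔭} (h : Reduced Γ (X ++ Y)) : Reduced Γ X :=
  (reduced_append.mp h).1

theorem reduced_append_right {X Y : Word 𝔭} (h : Reduced Γ (X ++ Y)) : Reduced Γ Y :=
  (reduced_append.mp h).2.1

theorem step_perm {w w' : Word 𝔭} (h : Step Γ w w') : w.Perm w' := by
  induction h with
  | swap a b t _ => exact List.Perm.swap b a t
  | cons s _ ih => exact ih.cons s

theorem perm_lets {w w' : Word 𝔭} (h : w.Perm w') : lets w = lets w' := by
  ext u
  simp only [lets, Set.mem_setOf_eq]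
  constructor <;> (rintro ⟨s, hs, rfl⟩)
  · exact ⟨s, h.mem_iff.mp hs, rfl⟩
  · exact ⟨s, h.mem_iff.mpr hs, rfl⟩

theorem step_lets {w w' : Word 𝔭} (h : Step Γ w w') : lets w = lets w' :=
  perm_lets (step_perm h)

theorem weq_lets {w w' : Word 𝔭} (h : Weq Γ w w') : lets w = lets w' := by
  induction h with
  | rel x y hxy => exact step_lets hxy
  | refl x => rfl
  | symm x y _ ih => exact ih.symm
  | trans x y z _ _ ih ih' => exact ih.trans ih'

theorem step_valid {w w' : Word 𝔭} (h : Step Γ w w') : Valid w ↔ Valid w' := by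
  have hp := step_perm h
  constructor
  · exact fun hv s hs => hv s (hp.mem_iff.mpr hs)
  · exact fun hv s hs => hv s (hp.mem_iff.mp hs)

theorem weq_valid {w w' : Word 𝔭} (h : Weq Γ w w') : Valid w ↔ Valid w' := by
  induction h with
  | rel x y hxy => exact step_valid hxy
  | refl x => rfl
  | symm x y _ ih => exact ih.symm
  | trans x y z _ _ ih ih' => exact ih.trans ih'

theorem step_canPull {w w' : Word 𝔭} (h : Step Γ w w') (v : V) :
    CanPull Γ v w ↔ CanPull Γ v w' := by
  induction h with
  | swap a b t hadj =>
    simp only [canPull_cons]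
    constructor
    · rintro (rfl | ⟨h1, (h2 | ⟨h2, h3⟩)⟩)
      · exact Or.inr ⟨hadj.symm, Or.inl rfl⟩
      · exact Or.inl h2
      · exact Or.inr ⟨h2, Or.inr ⟨h1, h3⟩⟩
    · rintro (rfl | ⟨h1, (h2 | ⟨h2, h3⟩)⟩)
      · exact Or.inr ⟨hadj, Or.inl rfl⟩
      · exact Or.inl h2
      · exact Or.inr ⟨h2, Or.inr ⟨h1, h3⟩⟩
  | cons s _ ih => simp only [canPull_cons, ih]

theorem weq_canPull {w w' : Word 𝔭} (h : Weq Γ w w') (v : V) :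
    CanPull Γ v w ↔ CanPull Γ v w' := by
  induction h with
  | rel x y hxy => exact step_canPull hxy v
  | refl x => rfl
  | symm x y _ ih => exact ih.symm
  | trans x y z _ _ ih ih' => exact ih.trans ih'

theorem step_reduced {w w' : Word 𝔭} (h : Step Γ w w') :
    Reduced Γ w ↔ Reduced Γ w' := by
  induction h with
  | swap a b t hadj =>
    simp only [reduced_cons, canPull_cons]
    have hne : b.1 ≠ a.1 := hadj.symm.ne
    have hne' : a.1 ≠ b.1 := hadj.ne
    constructor
    · rintro ⟨h1, h2, h3⟩
      refine ⟨?_, ?_, h3⟩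
      · rintro (hc | ⟨-, hc⟩)
        · exact hne' hc
        · exact h2 hc
      · intro hc
        exact h1 (Or.inr ⟨hadj.symm, hc⟩)
    · rintro ⟨h1, h2, h3⟩
      refine ⟨?_, ?_, h3⟩
      · rintro (hc | ⟨-, hc⟩)
        · exact hne hc
        · exact h2 hc
      · intro hc
        exact h1 (Or.inr ⟨hadj, hc⟩)
  | cons s t' ih =>
    rename_i t₀ _
    simp only [reduced_cons, ih, step_canPull (by assumption) s.1]

theorem weq_reduced {w w' : Word 𝔭} (h : Weq Γ w w') :
    Reduced Γ w ↔ Reduced Γ w' := by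
  induction h with
  | rel x y hxy => exact step_reduced hxy
  | refl x => rfl
  | symm x y _ ih => exact ih.symm
  | trans x y z _ _ ih ih' => exact ih.trans ih'

/-- move a letter to the front past adjacent letters -/
theorem weq_pull_front {v : V} (e : ZMod (𝔭 v)) {w₁ : Word 𝔭} (w₂ : Word 𝔭)
    (h : AllAdj Γ v w₁) :
    Weq Γ (w₁ ++ ⟨v, e⟩ :: w₂) (⟨v, e⟩ :: (w₁ ++ w₂)) := by
  induction w₁ with
  | nil => exact Weq.refl _
  | cons a w₁ ih =>
    have h1 : Weq Γ (a :: (w₁ ++ ⟨v, e⟩ :: w₂)) (a :: ⟨v, e⟩ :: (w₁ ++ w₂)) :=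
      (ih (fun s hs => h s (List.mem_cons_of_mem _ hs))).cons a
    refine h1.trans ?_
    exact (Step.swap a ⟨v, e⟩ (w₁ ++ w₂) (h a (List.mem_cons_self))).weq

/-- move a letter to the back past adjacent letters -/
theorem weq_push_back {v : V} (e : ZMod (𝔭 v)) (w₁ : Word 𝔭) {w₂ : Word 𝔭}
    (h : AllAdj Γ v w₂) :
    Weq Γ (w₁ ++ ⟨v, e⟩ :: w₂) (w₁ ++ w₂ ++ [⟨v, e⟩]) := by
  rw [List.append_assoc]
  refine Weq.append_left w₁ ?_
  induction w₂ with
  | nil => exact Weq.refl _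
  | cons a w₂ ih =>
    refine ((Step.swap ⟨v, e⟩ a w₂ (h a (List.mem_cons_self)).symm).weq).trans ?_
    exact (ih (fun s hs => h s (List.mem_cons_of_mem _ hs))).cons a

/-! ## pull and act -/

open Classical in
noncomputable def pull (Γ : SimpleGraph V) (v : V) : Word 𝔭 → Option (ZMod (𝔭 v) × Word 𝔭)
  | [] => none
  | s :: t =>
    if h : s.1 = v then some (h ▸ s.2, t)
    else if Γ.Adj s.1 v then (pull Γ v t).map (fun p => (p.1, s :: p.2)) else none

@[simp] theorem pull_nil (v : V) : pull (𝔭 := 𝔭) Γ v [] = none := rfl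

@[simp] theorem pull_cons_self (v : V) (e : ZMod (𝔭 v)) (t : Word 𝔭) :
    pull Γ v (⟨v, e⟩ :: t) = some (e, t) := by
  unfold pull
  rw [dif_pos rfl]

theorem pull_cons_self' {s : Syl 𝔭} (h : s.1 = v) (t : Word 𝔭) :
    pull Γ v (s :: t) = some (h ▸ s.2, t) := by
  obtain ⟨u, e⟩ := s
  cases h
  simp

theorem pull_cons_adj {s : Syl 𝔭} (h : s.1 ≠ v) (ha : Γ.Adj s.1 v) (t : Word 𝔭) :
    pull Γ v (s :: t) = (pull Γ v t).map (fun p => (p.1, s :: p.2)) := by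
  conv_lhs => rw [pull]
  rw [dif_neg h, if_pos ha]

theorem pull_cons_nadj {s : Syl 𝔭} (h : s.1 ≠ v) (ha : ¬ Γ.Adj s.1 v) (t : Word 𝔭) :
    pull Γ v (s :: t) = none := by
  conv_lhs => rw [pull]
  rw [dif_neg h, if_neg ha]

theorem pull_none_iff {v : V} {w : Word 𝔭} : pull Γ v w = none ↔ ¬ CanPull Γ v w := by
  induction w with
  | nil => simp
  | cons s t ih =>
    by_cases h : s.1 = v
    · rw [pull_cons_self' h]
      simp [canPull_cons, h]
    · by_cases ha : Γ.Adj s.1 v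
      · rw [pull_cons_adj h ha, canPull_cons]
        simp only [Option.map_eq_none_iff, ih]
        constructor
        · intro hn
          rintro (hc | ⟨-, hc⟩)
          exacts [h hc, hn hc]
        · intro hn hc
          exact hn (Or.inr ⟨ha, hc⟩)
      · rw [pull_cons_nadj h ha, canPull_cons]
        simp only [true_iff]
        rintro (hc | ⟨hc, -⟩)
        exacts [h hc, ha hc]

theorem pull_some_decomp {v : V} {w w' : Word 𝔭} {e : ZMod (𝔭 v)}
    (h : pull Γ v w = some (e, w')) :
    ∃ w₁ w₂, w = w₁ ++ ⟨v, e⟩ :: w₂ ∧ w' = w₁ ++ w₂ ∧ AllAdj Γ v w₁ := by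
  induction w generalizing w' with
  | nil => simp at h
  | cons s t ih =>
    by_cases h1 : s.1 = v
    · obtain ⟨u, x⟩ := s
      cases h1
      rw [pull_cons_self] at h
      have hx : x = e ∧ t = w' := by
        have := Option.some.inj h
        exact ⟨congrArg Prod.fst this, congrArg Prod.snd this⟩
      obtain ⟨rfl, rfl⟩ := hx
      exact ⟨[], t, rfl, rfl, fun s hs => absurd hs List.not_mem_nil⟩
    · by_cases ha : Γ.Adj s.1 v
      · rw [pull_cons_adj h1 ha] at h
        rcases Option.map_eq_some_iff.mp h with ⟨⟨e', t'⟩, hp, heq⟩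
        have h1 : e' = e := congrArg Prod.fst heq
        have h2 : w' = s :: t' := (congrArg Prod.snd heq).symm
        subst h1
        subst h2
        obtain ⟨w₁, w₂, rfl, rfl, hall⟩ := ih hp
        exact ⟨s :: w₁, w₂, rfl, rfl, fun x hx => by
          rcases List.mem_cons.mp hx with rfl | hx
          exacts [ha, hall x hx]⟩
      · rw [pull_cons_nadj h1 ha] at h
        simp at h

theorem pull_of_decomp {v : V} (e : ZMod (𝔭 v)) {w₁ : Word 𝔭} (w₂ : Word 𝔭)
    (hall : AllAdj Γ v w₁) :
    pull Γ v (w₁ ++ ⟨v, e⟩ :: w₂) = some (e, w₁ ++ w₂) := by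
  induction w₁ with
  | nil => simp
  | cons a w₁ ih =>
    have ha : Γ.Adj a.1 v := hall a (List.mem_cons_self)
    rw [List.cons_append, pull_cons_adj ha.ne ha, ih (fun s hs => hall s (List.mem_cons_of_mem _ hs))]
    rfl

theorem pull_weq {v : V} {w w' : Word 𝔭} {e : ZMod (𝔭 v)}
    (h : pull Γ v w = some (e, w')) : Weq Γ w (⟨v, e⟩ :: w') := by
  obtain ⟨w₁, w₂, rfl, rfl, hall⟩ := pull_some_decomp h
  exact weq_pull_front e w₂ hall

theorem pull_lets {v : V} {w w' : Word 𝔭} {e : ZMod (𝔭 v)}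
    (h : pull Γ v w = some (e, w')) : lets w = insert v (lets w') := by
  have h1 := weq_lets (pull_weq h)
  rw [h1]
  ext u
  simp only [lets, Set.mem_insert_iff, Set.mem_setOf_eq, List.mem_cons]
  constructor
  · rintro ⟨s, (rfl | hs), rfl⟩
    · exact Or.inl rfl
    · exact Or.inr ⟨s, hs, rfl⟩
  · rintro (rfl | ⟨s, hs, rfl⟩)
    · exact ⟨⟨u, e⟩, Or.inl rfl, rfl⟩
    · exact ⟨s, Or.inr hs, rfl⟩

theorem pull_valid {v : V} {w w' : Word 𝔭} {e : ZMod (𝔭 v)}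
    (hv : Valid w) (h : pull Γ v w = some (e, w')) : e ≠ 0 ∧ Valid w' := by
  have h1 := (weq_valid (pull_weq h)).mp hv
  exact ⟨h1 ⟨v, e⟩ (List.mem_cons_self), fun s hs => h1 s (List.mem_cons_of_mem _ hs)⟩

theorem pull_reduced {v : V} {w w' : Word 𝔭} {e : ZMod (𝔭 v)}
    (hr : Reduced Γ w) (h : pull Γ v w = some (e, w')) :
    ¬ CanPull Γ v w' ∧ Reduced Γ w' :=
  (weq_reduced (pull_weq h)).mp hr

noncomputable def act (Γ : SimpleGraph V) (v : V) (k : ZMod (𝔭 v)) (w : Word 𝔭) : Word 𝔭 :=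
  match pull Γ v w with
  | some (e, w') => if k + e = 0 then w' else ⟨v, k + e⟩ :: w'
  | none => if k = 0 then w else ⟨v, k⟩ :: w

theorem act_of_some {v : V} {w w' : Word 𝔭} {e : ZMod (𝔭 v)} (k : ZMod (𝔭 v))
    (h : pull Γ v w = some (e, w')) :
    act Γ v k w = if k + e = 0 then w' else ⟨v, k + e⟩ :: w' := by
  unfold act
  rw [h]

theorem act_of_none {v : V} {w : Word 𝔭} (k : ZMod (𝔭 v))
    (h : pull Γ v w = none) :
    act Γ v k w = if k = 0 then w else ⟨v, k⟩ :: w := by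
  unfold act
  rw [h]

theorem act_preserves {v : V} {w : Word 𝔭} (k : ZMod (𝔭 v))
    (hr : Reduced Γ w) (hv : Valid w) :
    Reduced Γ (act Γ v k w) ∧ Valid (act Γ v k w) := by
  rcases he : pull Γ v w with - | ⟨e, w'⟩
  · rw [act_of_none k he]
    split_ifs with h
    · exact ⟨hr, hv⟩
    · refine ⟨reduced_cons.mpr ⟨pull_none_iff.mp he, hr⟩, ?_⟩
      intro s hs
      rcases List.mem_cons.mp hs with rfl | hs
      exacts [h, hv s hs]
  · rw [act_of_some k he]
    obtain ⟨hnc, hr'⟩ := pull_reduced hr he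
    obtain ⟨he0, hv'⟩ := pull_valid hv he
    split_ifs with h
    · exact ⟨hr', hv'⟩
    · refine ⟨reduced_cons.mpr ⟨hnc, hr'⟩, ?_⟩
      intro s hs
      rcases List.mem_cons.mp hs with rfl | hs
      exacts [h, hv' s hs]

theorem act_act {v : V} {w : Word 𝔭} (k l : ZMod (𝔭 v)) (hr : Reduced Γ w) :
    act Γ v k (act Γ v l w) = act Γ v (k + l) w := by
  rcases he : pull Γ v w with - | ⟨e, w'⟩
  · have hn : ¬ CanPull Γ v w := pull_none_iff.mp he
    rw [act_of_none l he, act_of_none (k + l) he]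
    by_cases h1 : l = 0
    · rw [if_pos h1, act_of_none k he, h1, add_zero]
    · rw [if_neg h1, act_of_some k (pull_cons_self v l w)]
  · have hnc : ¬ CanPull Γ v w' := (pull_reduced hr he).1
    have hn' : pull Γ v w' = none := pull_none_iff.mpr hnc
    rw [act_of_some l he, act_of_some (k + l) he]
    by_cases h1 : l + e = 0
    · rw [if_pos h1, act_of_none k hn']
      have harr : k + l + e = k := by rw [add_assoc, h1, add_zero]
      rw [harr]
    · rw [if_neg h1, act_of_some k (pull_cons_self v (l + e) w'), ← add_assoc]

theorem act_zero_weq {v : V} {w : Word 𝔭} (hv : Valid w) :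
    Weq Γ (act Γ v 0 w) w := by
  rcases he : pull Γ v w with - | ⟨e, w'⟩
  · rw [act_of_none 0 he, if_pos rfl]
    exact Weq.refl _
  · rw [act_of_some 0 he, if_neg (by rw [zero_add]; exact (pull_valid hv he).1), zero_add]
    exact (pull_weq he).symm

theorem act_lets {v : V} {w : Word 𝔭} (k : ZMod (𝔭 v)) :
    lets (act Γ v k w) ⊆ insert v (lets w) := by
  rcases he : pull Γ v w with - | ⟨e, w'⟩
  · rw [act_of_none k he]
    split_ifs
    · exact Set.subset_insert _ _
    · rintro u ⟨s, hs, rfl⟩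
      rcases List.mem_cons.mp hs with rfl | hs
      · exact Set.mem_insert _ _
      · exact Set.mem_insert_iff.mpr (Or.inr ⟨s, hs, rfl⟩)
  · have hl : lets w' ⊆ lets w := by rw [pull_lets he]; exact Set.subset_insert _ _
    rw [act_of_some k he]
    split_ifs
    · exact fun u hu => Set.mem_insert_iff.mpr (Or.inr (hl hu))
    · rintro u ⟨s, hs, rfl⟩
      rcases List.mem_cons.mp hs with rfl | hs
      · exact Set.mem_insert _ _
      · exact Set.mem_insert_iff.mpr (Or.inr (hl ⟨s, hs, rfl⟩))

theorem step_symm {w w' : Word 𝔭} (h : Step Γ w w') : Step Γ w' w := by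
  induction h with
  | swap a b t hadj => exact Step.swap b a t hadj.symm
  | cons s _ ih => exact Step.cons s ih

theorem pull_map_some {v : V} {t : Word 𝔭} {e : ZMod (𝔭 v)} {u : Word 𝔭} (s : Syl 𝔭)
    (h1 : s.1 ≠ v) (ha : Γ.Adj s.1 v) (ht : pull Γ v t = some (e, u)) :
    pull Γ v (s :: t) = some (e, s :: u) := by
  rw [pull_cons_adj h1 ha, ht]
  rfl

theorem pull_map_none {v : V} {t : Word 𝔭} (s : Syl 𝔭)
    (h1 : s.1 ≠ v) (ht : pull Γ v t = none) :
    pull Γ v (s :: t) = none := by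
  by_cases ha : Γ.Adj s.1 v
  · rw [pull_cons_adj h1 ha, ht]
    rfl
  · exact pull_cons_nadj h1 ha t

theorem pull_cons_cases {v : V} {t : Word 𝔭} {e : ZMod (𝔭 v)} {u : Word 𝔭} {s : Syl 𝔭}
    (h1 : s.1 ≠ v) (hp : pull Γ v (s :: t) = some (e, u)) :
    ∃ u₀, pull Γ v t = some (e, u₀) ∧ u = s :: u₀ ∧ Γ.Adj s.1 v := by
  by_cases ha : Γ.Adj s.1 v
  · rw [pull_cons_adj h1 ha] at hp
    rcases ht : pull Γ v t with - | ⟨e', u₀⟩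
    · rw [ht] at hp; simp at hp
    · rw [ht] at hp
      simp only [Option.map_some] at hp
      have hee : e' = e := congrArg Prod.fst (Option.some.inj hp)
      have huu : u = s :: u₀ := (congrArg Prod.snd (Option.some.inj hp)).symm
      subst hee
      exact ⟨u₀, rfl, huu, ha⟩
  · rw [pull_cons_nadj h1 ha] at hp
    simp at hp

theorem pull_step {v : V} {t t' : Word 𝔭} (h : Step Γ t t') :
    ∀ {e : ZMod (𝔭 v)} {u : Word 𝔭}, pull Γ v t = some (e, u) →
    ∃ u', pull Γ v t' = some (e, u') ∧ Weq Γ u u' := by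
  induction h with
  | swap a b s hadj =>
    intro e u hp
    by_cases h1 : a.1 = v
    · rw [pull_cons_self' h1] at hp
      have hee : h1 ▸ a.2 = e := congrArg Prod.fst (Option.some.inj hp)
      have huu : u = b :: s := (congrArg Prod.snd (Option.some.inj hp)).symm
      subst hee; subst huu
      have hbv : b.1 ≠ v := fun hh => (h1 ▸ hadj : Γ.Adj v b.1).ne' hh
      refine ⟨b :: s, ?_, Weq.refl _⟩
      rw [pull_map_some b hbv (h1 ▸ hadj.symm) (pull_cons_self' h1 s)]
    · by_cases h2 : b.1 = v
      · have hav : Γ.Adj a.1 v := h2 ▸ hadj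
        rw [pull_map_some a h1 hav (pull_cons_self' h2 s)] at hp
        have hee : h2 ▸ b.2 = e := congrArg Prod.fst (Option.some.inj hp)
        have huu : u = a :: s := (congrArg Prod.snd (Option.some.inj hp)).symm
        subst hee; subst huu
        exact ⟨a :: s, pull_cons_self' h2 _, Weq.refl _⟩
      · obtain ⟨u₀, hbs, rfl, hav⟩ := pull_cons_cases h1 hp
        obtain ⟨u₁, hss, rfl, hbv⟩ := pull_cons_cases h2 hbs
        refine ⟨b :: a :: u₁, ?_, (Step.swap a b u₁ hadj).weq⟩
        exact pull_map_some b h2 hbv (pull_map_some a h1 hav hss)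
  | cons s hst ih =>
    rename_i t₀ t₀'
    intro e u hp
    by_cases h1 : s.1 = v
    · rw [pull_cons_self' h1] at hp
      have hee : h1 ▸ s.2 = e := congrArg Prod.fst (Option.some.inj hp)
      have huu : u = t₀ := (congrArg Prod.snd (Option.some.inj hp)).symm
      subst hee; subst huu
      exact ⟨t₀', pull_cons_self' h1 _, hst.weq⟩
    · obtain ⟨u₀, ht, rfl, hav⟩ := pull_cons_cases h1 hp
      obtain ⟨u', hu', hw⟩ := ih ht
      exact ⟨s :: u', pull_map_some s h1 hav hu', hw.cons s⟩

theorem act_step {v : V} (k : ZMod (𝔭 v)) {w w' : Word 𝔭} (h : Step Γ w w') :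
    Weq Γ (act Γ v k w) (act Γ v k w') := by
  rcases hp : pull Γ v w with - | ⟨e, u⟩
  · have hp' : pull Γ v w' = none := by
      rw [pull_none_iff] at hp ⊢
      exact fun hc => hp ((step_canPull h v).mpr hc)
    rw [act_of_none k hp, act_of_none k hp']
    split_ifs
    · exact h.weq
    · exact (h.weq).cons _
  · obtain ⟨u', hp', hu⟩ := pull_step h hp
    rw [act_of_some k hp, act_of_some k hp']
    split_ifs
    · exact hu
    · exact hu.cons _

theorem act_weq {v : V} (k : ZMod (𝔭 v)) {w w' : Word 𝔭} (h : Weq Γ w w') :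
    Weq Γ (act Γ v k w) (act Γ v k w') := by
  induction h with
  | rel x y hxy => exact act_step k hxy
  | refl x => exact Weq.refl _
  | symm x y _ ih => exact ih.symm
  | trans x y z _ _ ih ih' => exact ih.trans ih'

theorem canPull_insert_adj {a b : V} {f : ZMod (𝔭 b)} (hadj : Γ.Adj b a) (u₁ u₂ : Word 𝔭)
    (h : CanPull Γ a (u₁ ++ u₂)) : CanPull Γ a (u₁ ++ ⟨b, f⟩ :: u₂) := by
  rcases canPull_append.mp h with h | ⟨h1, h2⟩
  · exact canPull_append.mpr (Or.inl h)
  · exact canPull_append.mpr (Or.inr ⟨h1, Or.inr ⟨hadj, h2⟩⟩)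

theorem pull_none_pull {a b : V} (hadj : Γ.Adj b a) {w wb : Word 𝔭} {f : ZMod (𝔭 b)}
    (ha : pull Γ a w = none) (hb : pull Γ b w = some (f, wb)) : pull Γ a wb = none := by
  rw [pull_none_iff] at ha ⊢
  obtain ⟨u₁, u₂, rfl, rfl, -⟩ := pull_some_decomp hb
  exact fun hc => ha (canPull_insert_adj hadj u₁ u₂ hc)

theorem pull_pull {a b : V} (hne : b ≠ a) {w wa wb : Word 𝔭} {e : ZMod (𝔭 a)} {f : ZMod (𝔭 b)}
    (ha : pull Γ a w = some (e, wa)) (hb : pull Γ b w = some (f, wb)) :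
    ∃ w₃, pull Γ b wa = some (f, w₃) ∧ pull Γ a wb = some (e, w₃) := by
  induction w generalizing wa wb with
  | nil => simp at ha
  | cons s t ih =>
    by_cases h1 : s.1 = a
    · rw [pull_cons_self' h1] at ha
      have hee : h1 ▸ s.2 = e := congrArg Prod.fst (Option.some.inj ha)
      have huu : wa = t := (congrArg Prod.snd (Option.some.inj ha)).symm
      subst hee; subst huu
      have hsb : s.1 ≠ b := fun hh => hne (hh ▸ h1)
      obtain ⟨u₀, ht, rfl, hsbadj⟩ := pull_cons_cases hsb hb
      exact ⟨u₀, ht, pull_cons_self' h1 _⟩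
    · by_cases h2 : s.1 = b
      · rw [pull_cons_self' h2] at hb
        have hee : h2 ▸ s.2 = f := congrArg Prod.fst (Option.some.inj hb)
        have huu : wb = t := (congrArg Prod.snd (Option.some.inj hb)).symm
        subst hee; subst huu
        obtain ⟨u₀, ht, rfl, hsaadj⟩ := pull_cons_cases h1 ha
        exact ⟨u₀, pull_cons_self' h2 _, ht⟩
      · obtain ⟨ua, hta, rfl, hsa⟩ := pull_cons_cases h1 ha
        obtain ⟨ub, htb, rfl, hsb⟩ := pull_cons_cases h2 hb
        obtain ⟨t₃, hx, hy⟩ := ih hta htb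
        exact ⟨s :: t₃, pull_map_some s h2 hsb hx, pull_map_some s h1 hsa hy⟩

/-- auxiliary case of commutation: `pull a` is some, `pull b` is none -/
theorem act_comm_aux {a b : V} (hadj : Γ.Adj a b) (k : ZMod (𝔭 a)) (l : ZMod (𝔭 b))
    {w wa : Word 𝔭} {e : ZMod (𝔭 a)}
    (ha : pull Γ a w = some (e, wa)) (hb : pull Γ b w = none) :
    Weq Γ (act Γ a k (act Γ b l w)) (act Γ b l (act Γ a k w)) := by
  have hbwa : pull Γ b wa = none := pull_none_pull hadj hb ha
  by_cases h1 : l = 0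
  · by_cases h2 : k + e = 0
    · rw [act_of_none l hb, if_pos h1, act_of_some k ha, if_pos h2,
        act_of_none l hbwa, if_pos h1]
      exact Weq.refl _
    · rw [act_of_none l hb, if_pos h1, act_of_some k ha, if_neg h2,
        act_of_none l (pull_map_none (v := b) ⟨a, k + e⟩ hadj.ne hbwa), if_pos h1]
      exact Weq.refl _
  · have hpl : pull Γ a (⟨b, l⟩ :: w) = some (e, ⟨b, l⟩ :: wa) :=
      pull_map_some _ hadj.ne' hadj.symm ha
    by_cases h2 : k + e = 0
    · rw [act_of_none l hb, if_neg h1, act_of_some k hpl, if_pos h2,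
        act_of_some k ha, if_pos h2, act_of_none l hbwa, if_neg h1]
      exact Weq.refl _
    · rw [act_of_none l hb, if_neg h1, act_of_some k hpl, if_neg h2,
        act_of_some k ha, if_neg h2,
        act_of_none l (pull_map_none (v := b) ⟨a, k + e⟩ hadj.ne hbwa), if_neg h1]
      exact (Step.swap ⟨a, k + e⟩ ⟨b, l⟩ wa hadj).weq

theorem act_comm {a b : V} (hadj : Γ.Adj a b) (k : ZMod (𝔭 a)) (l : ZMod (𝔭 b))
    (w : Word 𝔭) :
    Weq Γ (act Γ a k (act Γ b l w)) (act Γ b l (act Γ a k w)) := by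
  rcases ha : pull Γ a w with - | ⟨e, wa⟩
  · rcases hb : pull Γ b w with - | ⟨f, wb⟩
    · by_cases h1 : l = 0 <;> by_cases h2 : k = 0
      · rw [act_of_none l hb, if_pos h1, act_of_none k ha, if_pos h2,
          act_of_none l hb, if_pos h1]
        exact Weq.refl _
      · rw [act_of_none l hb, if_pos h1, act_of_none k ha, if_neg h2,
          act_of_none l (pull_map_none (v := b) ⟨a, k⟩ hadj.ne hb), if_pos h1]
        exact Weq.refl _
      · rw [act_of_none l hb, if_neg h1,
          act_of_none k (pull_map_none (v := a) ⟨b, l⟩ hadj.ne' ha), if_pos h2,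
          act_of_none k ha, if_pos h2, act_of_none l hb, if_neg h1]
        exact Weq.refl _
      · rw [act_of_none l hb, if_neg h1,
          act_of_none k (pull_map_none (v := a) ⟨b, l⟩ hadj.ne' ha), if_neg h2,
          act_of_none k ha, if_neg h2,
          act_of_none l (pull_map_none (v := b) ⟨a, k⟩ hadj.ne hb), if_neg h1]
        exact (Step.swap ⟨a, k⟩ ⟨b, l⟩ w hadj).weq
    · exact (act_comm_aux hadj.symm l k hb ha).symm
  · rcases hb : pull Γ b w with - | ⟨f, wb⟩
    · exact act_comm_aux hadj k l ha hb
    · obtain ⟨w₃, hba, hab⟩ := pull_pull hadj.ne' ha hb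
      have hpa : pull Γ a (⟨b, l + f⟩ :: wb) = some (e, ⟨b, l + f⟩ :: w₃) :=
        pull_map_some _ hadj.ne' hadj.symm hab
      have hpb : pull Γ b (⟨a, k + e⟩ :: wa) = some (f, ⟨a, k + e⟩ :: w₃) :=
        pull_map_some _ hadj.ne hadj hba
      by_cases h1 : l + f = 0 <;> by_cases h2 : k + e = 0
      · rw [act_of_some l hb, if_pos h1, act_of_some k hab, if_pos h2,
          act_of_some k ha, if_pos h2, act_of_some l hba, if_pos h1]
        exact Weq.refl _
      · rw [act_of_some l hb, if_pos h1, act_of_some k hab, if_neg h2,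
          act_of_some k ha, if_neg h2, act_of_some l hpb, if_pos h1]
        exact Weq.refl _
      · rw [act_of_some l hb, if_neg h1, act_of_some k hpa, if_pos h2,
          act_of_some k ha, if_pos h2, act_of_some l hba, if_neg h1]
        exact Weq.refl _
      · rw [act_of_some l hb, if_neg h1, act_of_some k hpa, if_neg h2,
          act_of_some k ha, if_neg h2, act_of_some l hpb, if_neg h1]
        exact (Step.swap ⟨a, k + e⟩ ⟨b, l + f⟩ w₃ hadj).weq

/-! ## the quotient of reduced words and the action -/

theorem lets_cons (s : Syl 𝔭) (u : Word 𝔭) : lets (s :: u) = insert s.1 (lets u) := by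
  ext x
  simp only [lets, Set.mem_insert_iff, Set.mem_setOf_eq, List.mem_cons]
  constructor
  · rintro ⟨t, (rfl | ht), rfl⟩
    · exact Or.inl rfl
    · exact Or.inr ⟨t, ht, rfl⟩
  · rintro (rfl | ⟨t, ht, rfl⟩)
    · exact ⟨s, Or.inl rfl, rfl⟩
    · exact ⟨t, Or.inr ht, rfl⟩

theorem lets_append (u v : Word 𝔭) : lets (u ++ v) = lets u ∪ lets v := by
  ext x
  simp only [lets, Set.mem_union, Set.mem_setOf_eq, List.mem_append]
  constructor
  · rintro ⟨t, (ht | ht), rfl⟩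
    exacts [Or.inl ⟨t, ht, rfl⟩, Or.inr ⟨t, ht, rfl⟩]
  · rintro (⟨t, ht, rfl⟩ | ⟨t, ht, rfl⟩)
    exacts [⟨t, Or.inl ht, rfl⟩, ⟨t, Or.inr ht, rfl⟩]

end lemmas

def RW (Γ : SimpleGraph V) (𝔭 : V → ℕ) : Type := {w : Word 𝔭 // Reduced Γ w ∧ Valid w}

instance rwStd (Γ : SimpleGraph V) (𝔭 : V → ℕ) : Setoid (RW Γ 𝔭) :=
  ⟨fun x y => Weq Γ x.1 y.1,
   ⟨fun _ => Weq.refl _, fun h => Weq.symm h, fun h h' => Weq.trans h h'⟩⟩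

def NF (Γ : SimpleGraph V) (𝔭 : V → ℕ) : Type := Quotient (rwStd Γ 𝔭)

section action

variable {Γ}

noncomputable def actRW (v : V) (k : ZMod (𝔭 v)) (x : RW Γ 𝔭) : RW Γ 𝔭 :=
  ⟨act Γ v k x.1, (act_preserves k x.2.1 x.2.2).1, (act_preserves k x.2.1 x.2.2).2⟩

noncomputable def ActQ (v : V) (k : ZMod (𝔭 v)) : NF Γ 𝔭 → NF Γ 𝔭 :=
  Quotient.map (actRW v k) (fun _ _ h => act_weq k h)

theorem ActQ_mk (v : V) (k : ZMod (𝔭 v)) (x : RW Γ 𝔭) :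
    ActQ v k (⟦x⟧ : NF Γ 𝔭) = ⟦actRW v k x⟧ := rfl

theorem nf_eq_of_eq {x y : RW Γ 𝔭} (h : x.1 = y.1) : (⟦x⟧ : NF Γ 𝔭) = ⟦y⟧ :=
  Quotient.sound (by rw [show x ≈ y ↔ Weq Γ x.1 y.1 from Iff.rfl, h]; exact Weq.refl _)

theorem ActQ_ActQ (v : V) (k l : ZMod (𝔭 v)) (q : NF Γ 𝔭) :
    ActQ v k (ActQ v l q) = ActQ v (k + l) q := by
  induction q using Quotient.inductionOn with
  | h x =>
    rw [ActQ_mk, ActQ_mk, ActQ_mk]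
    exact nf_eq_of_eq (act_act k l x.2.1)

theorem ActQ_zero (v : V) (q : NF Γ 𝔭) : ActQ v 0 q = q := by
  induction q using Quotient.inductionOn with
  | h x => exact Quotient.sound (act_zero_weq x.2.2)

noncomputable def sigma (v : V) : Equiv.Perm (NF Γ 𝔭) where
  toFun := ActQ v 1
  invFun := ActQ v (-1)
  left_inv := fun q => by rw [ActQ_ActQ, neg_add_cancel, ActQ_zero]
  right_inv := fun q => by rw [ActQ_ActQ, add_neg_cancel, ActQ_zero]

theorem sigma_apply (v : V) (q : NF Γ 𝔭) : sigma v q = ActQ v 1 q := rfl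

theorem sigma_pow_apply (v : V) (n : ℕ) (q : NF Γ 𝔭) :
    ((sigma v) ^ n) q = ActQ v (n : ZMod (𝔭 v)) q := by
  induction n generalizing q with
  | zero => rw [pow_zero, Nat.cast_zero, ActQ_zero]; rfl
  | succ n ih =>
    rw [pow_succ, Equiv.Perm.mul_apply, sigma_apply, ih, ActQ_ActQ]
    congr 1
    push_cast
    ring

theorem sigma_zpow_apply (v : V) (m : ℤ) (q : NF Γ 𝔭) :
    ((sigma v) ^ m) q = ActQ v (m : ZMod (𝔭 v)) q := by
  rcases m with n | n
  · rw [Int.ofNat_eq_coe, zpow_natCast, sigma_pow_apply]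
    norm_cast
  · rw [zpow_negSucc]
    have h1 : ∀ q', ((sigma v) ^ (n + 1) : Equiv.Perm (NF Γ 𝔭)) q' =
        ActQ v ((n + 1 : ℕ) : ZMod (𝔭 v)) q' := fun q' => sigma_pow_apply v (n + 1) q'
    have h3 : ((sigma v) ^ (n + 1)) (ActQ v (-(((n + 1 : ℕ) : ZMod (𝔭 v)))) q) = q := by
      rw [h1, ActQ_ActQ, add_neg_cancel, ActQ_zero]
    have h2 : ((sigma v) ^ (n + 1))⁻¹ q =
        ActQ v (-(((n + 1 : ℕ) : ZMod (𝔭 v)))) q := by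
      conv_lhs => rw [← h3]
      exact Equiv.symm_apply_apply _ _
    rw [h2]
    congr 1
    push_cast
    ring

theorem sigma_pow_rel (v : V) (hv : 𝔭 v ≠ 0) :
    ((sigma v) ^ (𝔭 v) : Equiv.Perm (NF Γ 𝔭)) = 1 := by
  ext q
  rw [sigma_pow_apply, ZMod.natCast_self, ActQ_zero]
  rfl

theorem sigma_comm {a b : V} (hadj : Γ.Adj a b) :
    (sigma a : Equiv.Perm (NF Γ 𝔭)) * sigma b = sigma b * sigma a := by
  ext q
  induction q using Quotient.inductionOn with
  | h x =>
    change ((sigma a * sigma b : Equiv.Perm (NF Γ 𝔭)) (⟦x⟧ : NF Γ 𝔭)) =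
      (sigma b * sigma a : Equiv.Perm (NF Γ 𝔭)) (⟦x⟧ : NF Γ 𝔭)
    erw [Equiv.Perm.mul_apply, Equiv.Perm.mul_apply, sigma_apply, sigma_apply,
      sigma_apply, sigma_apply, ActQ_mk, ActQ_mk]
    exact Quotient.sound (act_comm hadj 1 1 x.1)

end action

section Phi

variable {Γ}

noncomputable def Phi : GraphProduct Γ 𝔭 →* Equiv.Perm (NF Γ 𝔭) :=
  PresentedGroup.toGroup (f := fun v => sigma v) (by
    rintro r (⟨v, hv, rfl⟩ | ⟨a, b, hadj, rfl⟩)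
    · rw [map_pow, FreeGroup.lift_apply_of]
      exact sigma_pow_rel v hv
    · simp only [map_mul, map_inv, FreeGroup.lift_apply_of]
      have hc := sigma_comm (𝔭 := 𝔭) hadj
      have hres : (sigma a : Equiv.Perm (NF Γ 𝔭)) * sigma b * (sigma a)⁻¹ * (sigma b)⁻¹ = 1 := by
        rw [hc]
        group
      exact hres)

theorem Phi_of (v : V) : Phi (GraphProduct.of v : GraphProduct Γ 𝔭) = sigma v :=
  PresentedGroup.toGroup.of _

theorem Phi_pw (v : V) (e : ZMod (𝔭 v)) (q : NF Γ 𝔭) :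
    Phi (pw Γ 𝔭 v e) q = ActQ v e q := by
  rw [pw_eq_zpow, map_zpow, Phi_of]
  have := sigma_zpow_apply (Γ := Γ) (𝔭 := 𝔭) v (ZMod.cast e) q
  rw [this, ZMod.intCast_zmod_cast]

end Phi

section evalsec

variable {Γ}

noncomputable def eval (Γ : SimpleGraph V) (𝔭 : V → ℕ) (w : Word 𝔭) : GraphProduct Γ 𝔭 :=
  (w.map (fun s => pw Γ 𝔭 s.1 s.2)).prod

@[simp] theorem eval_nil : eval Γ 𝔭 ([] : Word 𝔭) = 1 := rfl

theorem eval_cons (s : Syl 𝔭) (w : Word 𝔭) :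
    eval Γ 𝔭 (s :: w) = pw Γ 𝔭 s.1 s.2 * eval Γ 𝔭 w := by
  unfold eval
  rw [List.map_cons, List.prod_cons]

theorem eval_append (u v : Word 𝔭) :
    eval Γ 𝔭 (u ++ v) = eval Γ 𝔭 u * eval Γ 𝔭 v := by
  unfold eval
  rw [List.map_append, List.prod_append]

theorem eval_step {w w' : Word 𝔭} (h : Step Γ w w') : eval Γ 𝔭 w = eval Γ 𝔭 w' := by
  induction h with
  | swap a b t hadj =>
    rw [eval_cons, eval_cons, eval_cons, eval_cons, ← mul_assoc, ← mul_assoc,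
      (pw_comm Γ 𝔭 hadj a.2 b.2).eq]
  | cons s _ ih => rw [eval_cons, eval_cons, ih]

theorem eval_weq {w w' : Word 𝔭} (h : Weq Γ w w') : eval Γ 𝔭 w = eval Γ 𝔭 w' := by
  induction h with
  | rel x y hxy => exact eval_step hxy
  | refl x => rfl
  | symm x y _ ih => exact ih.symm
  | trans x y z _ _ ih ih' => exact ih.trans ih'

theorem eval_pull {v : V} {w w' : Word 𝔭} {e : ZMod (𝔭 v)}
    (h : pull Γ v w = some (e, w')) :
    eval Γ 𝔭 w = pw Γ 𝔭 v e * eval Γ 𝔭 w' := by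
  rw [eval_weq (pull_weq h), eval_cons]

theorem eval_act (v : V) (k : ZMod (𝔭 v)) (w : Word 𝔭) :
    eval Γ 𝔭 (act Γ v k w) = pw Γ 𝔭 v k * eval Γ 𝔭 w := by
  rcases hp : pull Γ v w with - | ⟨e, u⟩
  · rw [act_of_none k hp]
    split_ifs with h
    · rw [h, pw_zero, one_mul]
    · rw [eval_cons]
  · rw [act_of_some k hp, eval_pull hp]
    split_ifs with h
    · rw [← mul_assoc, ← pw_add, h, pw_zero, one_mul]
    · rw [eval_cons]
      show pw Γ 𝔭 v (k + e) * eval Γ 𝔭 u = _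
      rw [pw_add, mul_assoc]

/-- every group element is represented by a reduced word -/
theorem exists_reduced (u : Word 𝔭) :
    ∃ w : Word 𝔭, Reduced Γ w ∧ Valid w ∧ eval Γ 𝔭 w = eval Γ 𝔭 u ∧ lets w ⊆ lets u := by
  induction u with
  | nil => exact ⟨[], reduced_nil, fun s hs => absurd hs List.not_mem_nil, rfl,
      fun x hx => hx⟩
  | cons s u ih =>
    obtain ⟨w, hr, hv, he, hl⟩ := ih
    refine ⟨act Γ s.1 s.2 w, (act_preserves s.2 hr hv).1, (act_preserves s.2 hr hv).2, ?_, ?_⟩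
    · rw [eval_act, he, eval_cons]
    · refine (act_lets s.2).trans ?_
      rw [lets_cons]
      exact Set.insert_subset_insert hl

/-- E3 : the normal form of `eval w` is `w` itself, for reduced `w`. -/
theorem Phi_eval {w u : Word 𝔭} (h : Reduced Γ (w ++ u)) (hv : Valid (w ++ u)) :
    Phi (eval Γ 𝔭 w) (⟦⟨u, reduced_append_right h,
        fun s hs => hv s (List.mem_append_right w hs)⟩⟧ : NF Γ 𝔭) = ⟦⟨w ++ u, h, hv⟩⟧ := by
  induction w with
  | nil => rw [eval_nil, map_one]; rfl
  | cons s w ih =>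
    have h' : Reduced Γ (w ++ u) := (reduced_cons.mp h).2
    have hv' : Valid (w ++ u) := fun t ht => hv t (List.mem_cons_of_mem _ ht)
    erw [eval_cons, map_mul, Equiv.Perm.mul_apply, ih h' hv', Phi_pw, ActQ_mk]
    apply nf_eq_of_eq
    show act Γ s.1 s.2 (w ++ u) = s :: (w ++ u)
    have hnc : ¬ CanPull Γ s.1 (w ++ u) := (reduced_cons.mp h).1
    rw [act_of_none s.2 (pull_none_iff.mpr hnc),
      if_neg (hv s (List.mem_cons_self))]

theorem pw_neg (v : V) (e : ZMod (𝔭 v)) : pw Γ 𝔭 v (-e) = (pw Γ 𝔭 v e)⁻¹ := by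
  have h : pw Γ 𝔭 v e * pw Γ 𝔭 v (-e) = 1 := by
    rw [← pw_add, add_neg_cancel, pw_zero]
  exact eq_inv_of_mul_eq_one_left
    (by rw [← pw_add, neg_add_cancel, pw_zero])

noncomputable def invW (w : Word 𝔭) : Word 𝔭 := (w.map (fun s => ⟨s.1, -s.2⟩)).reverse

theorem eval_invW (w : Word 𝔭) : eval Γ 𝔭 (invW w) = (eval Γ 𝔭 w)⁻¹ := by
  induction w with
  | nil => simp [invW]
  | cons s w ih =>
    have h1 : invW (s :: w) = invW w ++ [(⟨s.1, -s.2⟩ : Syl 𝔭)] := by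
      unfold invW
      rw [List.map_cons, List.reverse_cons]
    rw [h1, eval_append, ih, eval_cons, eval_nil, mul_one]
    show _ * pw Γ 𝔭 s.1 (-s.2) = _
    rw [pw_neg, eval_cons, mul_inv_rev]

theorem lets_invW (w : Word 𝔭) : lets (invW w) = lets w := by
  ext x
  simp only [lets, invW, Set.mem_setOf_eq, List.mem_reverse, List.mem_map]
  constructor
  · rintro ⟨s, ⟨t, ht, rfl⟩, rfl⟩
    exact ⟨t, ht, rfl⟩
  · rintro ⟨t, ht, rfl⟩
    exact ⟨⟨t.1, -t.2⟩, ⟨t, ht, rfl⟩, rfl⟩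

theorem closure_eval {A : Set V} {g : GraphProduct Γ 𝔭}
    (h : g ∈ Subgroup.closure (GraphProduct.of '' A)) :
    ∃ u : Word 𝔭, lets u ⊆ A ∧ eval Γ 𝔭 u = g := by
  induction h using Subgroup.closure_induction with
  | mem x hx =>
    obtain ⟨v, hv, rfl⟩ := hx
    refine ⟨[⟨v, 1⟩], ?_, ?_⟩
    · rw [lets_cons]
      intro x hx
      rcases hx with rfl | hx
      · exact hv
      · exact absurd hx (by rintro ⟨s, hs, -⟩; exact List.not_mem_nil hs)
    · rw [eval_cons, eval_nil, mul_one]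
      exact pw_one' Γ 𝔭 v
  | one => exact ⟨[], by rintro x ⟨s, hs, -⟩; exact absurd hs List.not_mem_nil, rfl⟩
  | mul x y hx hy ihx ihy =>
    obtain ⟨u₁, hl₁, he₁⟩ := ihx
    obtain ⟨u₂, hl₂, he₂⟩ := ihy
    refine ⟨u₁ ++ u₂, ?_, by rw [eval_append, he₁, he₂]⟩
    rw [lets_append]
    exact Set.union_subset hl₁ hl₂
  | inv x hx ihx =>
    obtain ⟨u, hl, he⟩ := ihx
    exact ⟨invW u, by rwa [lets_invW], by rw [eval_invW, he]⟩

theorem eval_mem_closure {A : Set V} {u : Word 𝔭} (h : lets u ⊆ A) :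
    eval Γ 𝔭 u ∈ Subgroup.closure (GraphProduct.of '' A) := by
  induction u with
  | nil => exact Subgroup.one_mem _
  | cons s u ih =>
    rw [eval_cons]
    refine Subgroup.mul_mem _ (pw_mem_closure Γ 𝔭 (h ?_) s.2) (ih ?_)
    · exact ⟨s, List.mem_cons_self, rfl⟩
    · intro x hx
      apply h
      rw [lets_cons]
      exact Set.mem_insert_iff.mpr (Or.inr hx)

theorem exists_word (g : GraphProduct Γ 𝔭) : ∃ u : Word 𝔭, eval Γ 𝔭 u = g := by
  have h1 : Subgroup.closure (Set.range (GraphProduct.of : V → GraphProduct Γ 𝔭)) = ⊤ :=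
    PresentedGroup.closure_range_of _
  have h2 : g ∈ Subgroup.closure (GraphProduct.of '' (Set.univ : Set V)) := by
    rw [Set.image_univ, h1]
    trivial
  obtain ⟨u, -, he⟩ := closure_eval h2
  exact ⟨u, he⟩

theorem exists_reduced_rep (g : GraphProduct Γ 𝔭) :
    ∃ w : Word 𝔭, Reduced Γ w ∧ Valid w ∧ eval Γ 𝔭 w = g := by
  obtain ⟨u, he⟩ := exists_word g
  obtain ⟨w, h1, h2, h3, -⟩ := exists_reduced u
  exact ⟨w, h1, h2, h3.trans he⟩

theorem Phi_eval_nil {w : Word 𝔭} (hr : Reduced Γ w) (hv : Valid w) :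
    Phi (eval Γ 𝔭 w) (⟦⟨[], reduced_nil, fun s hs => absurd hs List.not_mem_nil⟩⟧ :
      NF Γ 𝔭) = ⟦⟨w, hr, hv⟩⟧ := by
  have hr' : Reduced Γ (w ++ []) := by rwa [List.append_nil]
  have hv' : Valid (w ++ ([] : Word 𝔭)) := by rwa [List.append_nil]
  have h := Phi_eval hr' hv'
  rw [show (⟦⟨[], reduced_append_right hr', fun s hs => hv' s (List.mem_append_right w hs)⟩⟧ :
      NF Γ 𝔭) = ⟦⟨[], reduced_nil, fun s hs => absurd hs List.not_mem_nil⟩⟧ from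
    nf_eq_of_eq rfl] at h
  rw [h]
  exact nf_eq_of_eq (List.append_nil w)

/-- uniqueness of reduced words up to shuffle equivalence -/
theorem weq_of_eval_eq {w w' : Word 𝔭} (hr : Reduced Γ w) (hv : Valid w)
    (hr' : Reduced Γ w') (hv' : Valid w') (h : eval Γ 𝔭 w = eval Γ 𝔭 w') :
    Weq Γ w w' := by
  have h1 := Phi_eval_nil hr hv
  have h2 := Phi_eval_nil hr' hv'
  rw [h] at h1
  rw [h1] at h2
  exact Quotient.exact h2

/-- the letters of a reduced word for `g` are contained in the letters of any word for `g` -/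
theorem lets_reduced_min {w u : Word 𝔭} (hr : Reduced Γ w) (hv : Valid w)
    (h : eval Γ 𝔭 w = eval Γ 𝔭 u) : lets w ⊆ lets u := by
  obtain ⟨w₂, hr₂, hv₂, he₂, hl₂⟩ := exists_reduced (Γ := Γ) u
  have hweq := weq_of_eval_eq hr hv hr₂ hv₂ (by rw [h, he₂])
  rw [weq_lets hweq]
  exact hl₂

theorem canPull_of_pull_some {v : V} {m m₁ : Word 𝔭} {e : ZMod (𝔭 v)}
    (h : pull Γ v m = some (e, m₁)) : CanPull Γ v m := by
  by_contra hc
  rw [pull_none_iff.mpr hc] at h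
  cases h

theorem allAdj_append {v : V} {X Y : Word 𝔭} :
    AllAdj Γ v (X ++ Y) ↔ AllAdj Γ v X ∧ AllAdj Γ v Y := by
  constructor
  · intro h
    exact ⟨fun s hs => h s (List.mem_append_left _ hs),
           fun s hs => h s (List.mem_append_right _ hs)⟩
  · rintro ⟨h1, h2⟩ s hs
    rcases List.mem_append.mp hs with hs | hs
    exacts [h1 s hs, h2 s hs]

theorem bclear_append {v : V} {X Y : Word 𝔭} :
    BClear Γ v (X ++ Y) ↔ (BClear Γ v X ∧ AllAdj Γ v Y) ∨ BClear Γ v Y := by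
  induction X with
  | nil =>
    simp only [List.nil_append]
    constructor
    · exact fun h => Or.inr h
    · rintro (⟨h, -⟩ | h)
      · exact absurd h bclear_not_nil
      · exact h
  | cons a X ih =>
    rw [List.cons_append, bclear_cons, bclear_cons, ih, allAdj_append]
    tauto

theorem canPull_single {u v : V} {x : ZMod (𝔭 v)} :
    CanPull Γ u ([⟨v, x⟩] : Word 𝔭) ↔ v = u := by
  rw [canPull_cons]
  simp [CanPull]

theorem reduced_single {v : V} {x : ZMod (𝔭 v)} : Reduced Γ ([⟨v, x⟩] : Word 𝔭) :=
  reduced_cons.mpr ⟨canPull_nil v, reduced_nil⟩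

/-- changing the exponent of a final letter preserves reducedness -/
theorem reduced_exp_last {v : V} {X : Word 𝔭} {a b : ZMod (𝔭 v)}
    (h : Reduced Γ (X ++ [⟨v, a⟩])) : Reduced Γ (X ++ [⟨v, b⟩]) := by
  obtain ⟨h1, -, h3⟩ := reduced_append.mp h
  refine reduced_append.mpr ⟨h1, reduced_single, fun u hb hc => ?_⟩
  exact h3 u hb (canPull_single.mpr (canPull_single.mp hc))

theorem canPull_exp_last {u v : V} {X : Word 𝔭} {a b : ZMod (𝔭 v)}
    (h : CanPull Γ u (X ++ [⟨v, a⟩])) : CanPull Γ u (X ++ [⟨v, b⟩]) := by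
  rcases canPull_append.mp h with h | ⟨h1, h2⟩
  · exact canPull_append.mpr (Or.inl h)
  · exact canPull_append.mpr (Or.inr ⟨h1, canPull_single.mpr (canPull_single.mp h2)⟩)

theorem conj_pow_group {G₀ : Type*} [Group G₀] (c x : G₀) (n : ℕ) :
    (c * x * c⁻¹) ^ n = c * x ^ n * c⁻¹ := by
  induction n with
  | zero => simp
  | succ n ih =>
    rw [pow_succ, ih, pow_succ]
    group

theorem comm_eval {v : V} {w : Word 𝔭} (h : AllAdj Γ v w) (e : ZMod (𝔭 v)) :
    Commute (pw Γ 𝔭 v e) (eval Γ 𝔭 w) := by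
  induction w with
  | nil => rw [eval_nil]; exact Commute.one_right _
  | cons s t ih =>
    rw [eval_cons]
    exact Commute.mul_right (pw_comm Γ 𝔭 (h s (List.mem_cons_self)).symm e s.2)
      (ih fun x hx => h x (List.mem_cons_of_mem _ hx))

/-- word powers -/
def wpow : ℕ → Word 𝔭 → Word 𝔭
  | 0, _ => []
  | k + 1, m => m ++ wpow k m

theorem eval_wpow (k : ℕ) (m : Word 𝔭) : eval Γ 𝔭 (wpow k m) = (eval Γ 𝔭 m) ^ k := by
  induction k with
  | zero => rw [pow_zero]; rfl
  | succ k ih => rw [wpow, eval_append, ih, pow_succ']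

theorem canPull_wpow {u : V} {m : Word 𝔭} : ∀ {k : ℕ}, CanPull Γ u (wpow k m) →
    CanPull Γ u m := by
  intro k
  induction k with
  | zero => intro h; exact absurd h (canPull_nil u)
  | succ k ih =>
    intro h
    rcases canPull_append.mp h with h | ⟨-, h⟩
    exacts [h, ih h]

theorem valid_wpow {m : Word 𝔭} (hv : Valid m) : ∀ {k : ℕ}, Valid (wpow k m) := by
  intro k
  induction k with
  | zero => exact fun s hs => absurd hs List.not_mem_nil
  | succ k ih =>
    intro s hs
    rcases List.mem_append.mp hs with hs | hs
    exacts [hv s hs, ih s hs]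

theorem lets_wpow {m : Word 𝔭} : ∀ {k : ℕ}, k ≠ 0 → lets (wpow k m) = lets m := by
  intro k
  induction k with
  | zero => intro h; exact absurd rfl h
  | succ k ih =>
    intro _h
    rcases Nat.eq_zero_or_pos k with rfl | hk
    · show lets (m ++ ([] : Word 𝔭)) = lets m
      rw [List.append_nil]
    · show lets (m ++ wpow k m) = lets m
      rw [lets_append, ih hk.ne']
      exact Set.union_self _

theorem reduced_wpow {m : Word 𝔭} (hr : Reduced Γ m)
    (hc : ∀ u, ¬ (BClear Γ u m ∧ CanPull Γ u m)) (k : ℕ) : Reduced Γ (wpow k m) := by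
  induction k with
  | zero => exact reduced_nil
  | succ k ih =>
    refine reduced_append.mpr ⟨hr, ih, fun u hb hcp => ?_⟩
    exact hc u ⟨hb, canPull_wpow hcp⟩

section mainlemma

variable {p : ℕ}

theorem pne (hpp : p.Prime) (hgt : ∀ w : V, 𝔭 w ≠ 0 → 𝔭 w < p)
    (v : V) {e : ZMod (𝔭 v)} (he : e ≠ 0) : (p : ZMod (𝔭 v)) * e ≠ 0 := by
  rcases Nat.eq_zero_or_pos (𝔭 v) with hn | hn
  · revert he e
    rw [hn]
    intro e he hc
    apply he
    have hphi := congrArg (ZMod.castHom (dvd_refl 0) ℤ) hc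
    rw [map_mul, map_natCast, map_zero] at hphi
    rcases mul_eq_zero.mp hphi with h | h
    · exact absurd h (Int.natCast_ne_zero.mpr hpp.ne_zero)
    · have h2 := congrArg (fun z : ℤ => (z : ZMod 0)) h
      exact (ZMod.intCast_zmod_cast e).symm.trans (h2.trans Int.cast_zero)
  · have hdvd : ¬ p ∣ 𝔭 v := fun hd =>
      absurd (hgt v hn.ne') (not_lt.mpr (Nat.le_of_dvd hn hd))
    have hu : IsUnit ((p : ℕ) : ZMod (𝔭 v)) := ZMod.isUnit_prime_of_not_dvd hpp hdvd
    intro hc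
    exact he ((hu.mul_right_eq_zero).mp hc)

theorem lets_singleton {v : V} (x : ZMod (𝔭 v)) : lets ([⟨v, x⟩] : Word 𝔭) = {v} := by
  ext u
  simp only [lets, Set.mem_setOf_eq, List.mem_singleton, Set.mem_singleton_iff]
  constructor
  · rintro ⟨s, rfl, rfl⟩; rfl
  · rintro rfl; exact ⟨_, rfl, rfl⟩

/-- the conjugation lemma: wrapping `pw v e ⬝ pw v (-e)` around a reduced word
with no pullable `v` and containing a blocker. -/
theorem conj_lemma {v : V} {e : ZMod (𝔭 v)} (he : e ≠ 0) {X : Word 𝔭}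
    (hrX : Reduced Γ X) (hvX : Valid X) (hnc : ¬ CanPull Γ v X)
    (hbl : ∃ b ∈ lets X, ¬ Γ.Adj b v) :
    ∃ Y : Word 𝔭, Reduced Γ Y ∧ Valid Y ∧
      eval Γ 𝔭 Y = pw Γ 𝔭 v e * eval Γ 𝔭 X * pw Γ 𝔭 v (-e) ∧
      lets Y = insert v (lets X) ∧
      (∀ u, CanPull Γ u Y → u = v ∨ (Γ.Adj v u ∧ CanPull Γ u X)) := by
  have hNAA : ¬ AllAdj Γ v X := by
    obtain ⟨b, hb, hbv⟩ := hbl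
    intro hall
    by_cases hbv' : b = v
    · exact allAdj_not_mem hall (hbv' ▸ hb)
    · obtain ⟨s, hs, rfl⟩ := hb
      exact hbv (hall s hs)
  by_cases hB : BClear Γ v X
  · obtain ⟨C, f, D, rfl, hD⟩ := hB
    set X' : Word 𝔭 := C ++ D with hX'
    have hwq : Weq Γ (C ++ ⟨v, f⟩ :: D) (X' ++ [⟨v, f⟩]) := weq_push_back f C hD
    have hrX2 : Reduced Γ (X' ++ [⟨v, f⟩]) := (weq_reduced hwq).mp hrX
    have hvX2 : Valid (X' ++ [⟨v, f⟩]) := (weq_valid hwq).mp hvX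
    have hrX' : Reduced Γ X' := reduced_append_left hrX2
    have hvX' : Valid X' := fun s hs => hvX2 s (List.mem_append_left _ hs)
    have hf : f ≠ 0 := hvX2 ⟨v, f⟩ (List.mem_append_right _ (List.mem_cons_self))
    have hncX' : ¬ CanPull Γ v X' := fun hc =>
      hnc ((weq_canPull hwq v).mpr (canPull_append.mpr (Or.inl hc)))
    have hnBX' : ¬ BClear Γ v X' := fun hb =>
      (reduced_append.mp hrX2).2.2 v hb (canPull_single.mpr rfl)
    have hNAA' : ¬ AllAdj Γ v X' := fun hall =>
      hnc ((weq_canPull hwq v).mpr (canPull_append.mpr (Or.inr ⟨hall, canPull_single.mpr rfl⟩)))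
    have hlX : lets (C ++ ⟨v, f⟩ :: D) = insert v (lets X') := by
      rw [weq_lets hwq, lets_append, lets_singleton, Set.union_singleton]
    have heval : eval Γ 𝔭 (C ++ ⟨v, f⟩ :: D) = eval Γ 𝔭 X' * pw Γ 𝔭 v f := by
      rw [eval_weq hwq, eval_append, eval_cons, eval_nil, mul_one]
    by_cases hfe : f + -e = 0
    · refine ⟨⟨v, e⟩ :: X', reduced_cons.mpr ⟨hncX', hrX'⟩, ?_, ?_, ?_, ?_⟩
      · intro s hs
        rcases List.mem_cons.mp hs with rfl | hs
        exacts [he, hvX' s hs]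
      · rw [eval_cons, heval, mul_assoc, mul_assoc, ← pw_add, hfe, pw_zero, mul_one]
      · rw [lets_cons, hlX, Set.insert_idem]
      · intro u hu
        rcases canPull_cons _ _ _ |>.mp hu with rfl | ⟨hadj, hcp⟩
        · exact Or.inl rfl
        · refine Or.inr ⟨hadj, ?_⟩
          exact (weq_canPull hwq u).mpr (canPull_append.mpr (Or.inl hcp))
    · refine ⟨⟨v, e⟩ :: (X' ++ [⟨v, f + -e⟩]), ?_, ?_, ?_, ?_, ?_⟩
      · refine reduced_cons.mpr ⟨?_, reduced_exp_last hrX2⟩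
        intro hc
        rcases canPull_append.mp hc with hc | ⟨hall, -⟩
        exacts [hncX' hc, hNAA' hall]
      · intro s hs
        rcases List.mem_cons.mp hs with rfl | hs
        · exact he
        rcases List.mem_append.mp hs with hs | hs
        · exact hvX' s hs
        · rcases List.mem_singleton.mp hs with rfl
          exact hfe
      · rw [eval_cons, eval_append, eval_cons, eval_nil, mul_one, heval]
        simp only [pw_add, mul_assoc]
      · rw [lets_cons, lets_append, lets_singleton, Set.union_singleton, Set.insert_idem,
          hlX, Set.insert_idem]
      · intro u hu
        rcases canPull_cons _ _ _ |>.mp hu with rfl | ⟨hadj, hcp⟩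
        · exact Or.inl rfl
        · rcases canPull_append.mp hcp with hc | ⟨-, hc⟩
          · exact Or.inr ⟨hadj, (weq_canPull hwq u).mpr (canPull_append.mpr (Or.inl hc))⟩
          · exact Or.inl (canPull_single.mp hc).symm
  · refine ⟨⟨v, e⟩ :: (X ++ [⟨v, -e⟩]), ?_, ?_, ?_, ?_, ?_⟩
    · refine reduced_cons.mpr ⟨?_, ?_⟩
      · intro hc
        rcases canPull_append.mp hc with hc | ⟨hall, -⟩
        exacts [hnc hc, hNAA hall]
      · refine reduced_append.mpr ⟨hrX, reduced_single, fun u hb hc => ?_⟩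
        rcases canPull_single.mp hc
        exact hB hb
    · intro s hs
      rcases List.mem_cons.mp hs with rfl | hs
      · exact he
      rcases List.mem_append.mp hs with hs | hs
      · exact hvX s hs
      · rcases List.mem_singleton.mp hs with rfl
        exact neg_ne_zero.mpr he
    · rw [eval_cons, eval_append, eval_cons, eval_nil, mul_one, mul_assoc]
    · rw [lets_cons, lets_append, lets_singleton, Set.union_singleton, Set.insert_idem]
    · intro u hu
      rcases canPull_cons _ _ _ |>.mp hu with rfl | ⟨hadj, hcp⟩
      · exact Or.inl rfl
      · rcases canPull_append.mp hcp with hc | ⟨-, hc⟩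
        · exact Or.inr ⟨hadj, hc⟩
        · exact Or.inl (canPull_single.mp hc).symm

theorem pull_length {v : V} {m m₁ : Word 𝔭} {e : ZMod (𝔭 v)}
    (h : pull Γ v m = some (e, m₁)) : m.length = m₁.length + 1 := by
  obtain ⟨w₁, w₂, rfl, rfl, -⟩ := pull_some_decomp h
  simp only [List.length_append, List.length_cons]
  omega

theorem cyc (hpp : p.Prime) (hgt : ∀ w : V, 𝔭 w ≠ 0 → 𝔭 w < p) :
    ∀ (N : ℕ) (m : Word 𝔭), Reduced Γ m → Valid m → m.length ≤ N →
    ∃ W : Word 𝔭, Reduced Γ W ∧ Valid W ∧ eval Γ 𝔭 W = (eval Γ 𝔭 m) ^ p ∧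
      lets W = lets m ∧ (∀ u, CanPull Γ u W → CanPull Γ u m) := by
  intro N
  induction N with
  | zero =>
    intro m hr hv hlen
    have hm : m = [] := List.length_eq_zero_iff.mp (Nat.le_zero.mp hlen)
    subst hm
    exact ⟨[], reduced_nil, fun s hs => absurd hs List.not_mem_nil,
      by rw [eval_nil, one_pow], rfl, fun u hu => hu⟩
  | succ N ih =>
    intro m hr hv hlen
    by_cases hwrap : ∃ v : V, ∃ (e : ZMod (𝔭 v)) (m₁ : Word 𝔭),
        pull Γ v m = some (e, m₁) ∧ BClear Γ v m₁
    · -- cyclic reduction step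
      obtain ⟨v, e, m₁, hpull, hB⟩ := hwrap
      have hwm : Weq Γ m (⟨v, e⟩ :: m₁) := pull_weq hpull
      have hr1 : Reduced Γ (⟨v, e⟩ :: m₁) := (weq_reduced hwm).mp hr
      have hnc1 : ¬ CanPull Γ v m₁ := (reduced_cons.mp hr1).1
      have hrm₁ : Reduced Γ m₁ := (reduced_cons.mp hr1).2
      obtain ⟨he0, hvm₁⟩ := pull_valid hv hpull
      have hlen1 : m.length = m₁.length + 1 := pull_length hpull
      obtain ⟨C, f, D, rfl, hD⟩ := hB
      set m₂ : Word 𝔭 := C ++ D with hm₂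
      have hw2 : Weq Γ (C ++ ⟨v, f⟩ :: D) (m₂ ++ [⟨v, f⟩]) := weq_push_back f C hD
      have hr2 : Reduced Γ (m₂ ++ [⟨v, f⟩]) := (weq_reduced hw2).mp hrm₁
      have hv2 : Valid (m₂ ++ [⟨v, f⟩]) := (weq_valid hw2).mp hvm₁
      have hrm₂ : Reduced Γ m₂ := reduced_append_left hr2
      have hvm₂ : Valid m₂ := fun s hs => hv2 s (List.mem_append_left _ hs)
      have hf0 : f ≠ 0 := hv2 ⟨v, f⟩ (List.mem_append_right _ (List.mem_cons_self))
      have hncm₂ : ¬ CanPull Γ v m₂ := fun hc =>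
        hnc1 ((weq_canPull hw2 v).mpr (canPull_append.mpr (Or.inl hc)))
      have hNAA₂ : ¬ AllAdj Γ v m₂ := fun hall =>
        hnc1 ((weq_canPull hw2 v).mpr (canPull_append.mpr
          (Or.inr ⟨hall, canPull_single.mpr rfl⟩)))
      have hbl₂ : ∃ b ∈ lets m₂, ¬ Γ.Adj b v := by
        obtain ⟨s, hs, hns⟩ := not_allAdj_exists hNAA₂
        exact ⟨s.1, ⟨s, hs, rfl⟩, hns⟩
      have hlen2 : m.length = m₂.length + 2 := by
        rw [hlen1, hm₂]
        simp only [List.length_append, List.length_cons]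
        omega
      have hevm : eval Γ 𝔭 m = pw Γ 𝔭 v e * (eval Γ 𝔭 m₂ * pw Γ 𝔭 v f) := by
        rw [eval_weq hwm, eval_cons, eval_weq hw2, eval_append, eval_cons, eval_nil, mul_one]
      have hletsm : lets m = insert v (lets m₂) := by
        rw [pull_lets hpull, weq_lets hw2, lets_append, lets_singleton,
          Set.union_singleton, Set.insert_idem]
      have hmem_m : ∀ u, Γ.Adj v u → CanPull Γ u m₂ → CanPull Γ u m := by
        intro u hadj hc
        refine (weq_canPull hwm u).mpr ?_
        refine (canPull_cons _ _ _).mpr (Or.inr ⟨hadj, ?_⟩)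
        exact (weq_canPull hw2 u).mpr (canPull_append.mpr (Or.inl hc))
      by_cases hE : f + e = 0
      · -- the two letters cancel
        obtain ⟨W', hrW', hvW', heW', hlW', hclW'⟩ :=
          ih m₂ hrm₂ hvm₂ (by omega)
        have hncW' : ¬ CanPull Γ v W' := fun hc => hncm₂ (hclW' v hc)
        have hblW' : ∃ b ∈ lets W', ¬ Γ.Adj b v := by rwa [hlW']
        obtain ⟨Y, hrY, hvY, heY, hlY, hclY⟩ :=
          conj_lemma he0 hrW' hvW' hncW' hblW'
        have hfe : f = -e := eq_neg_of_add_eq_zero_left hE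
        have hconj : eval Γ 𝔭 m = pw Γ 𝔭 v e * eval Γ 𝔭 m₂ * (pw Γ 𝔭 v e)⁻¹ := by
          rw [hevm, hfe, pw_neg, mul_assoc]
        refine ⟨Y, hrY, hvY, ?_, ?_, ?_⟩
        · rw [heY, heW', hconj, conj_pow_group, pw_neg, mul_assoc]
        · rw [hlY, hlW', hletsm]
        · intro u hu
          rcases hclY u hu with rfl | ⟨hadj, hcp⟩
          · exact canPull_of_pull_some hpull
          · exact hmem_m u hadj (hclW' u hcp)
      · -- merge the two letters
        set m' : Word 𝔭 := m₂ ++ [⟨v, f + e⟩] with hm'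
        have hrm' : Reduced Γ m' := reduced_exp_last hr2
        have hvm' : Valid m' := by
          intro s hs
          rcases List.mem_append.mp hs with hs | hs
          · exact hvm₂ s hs
          · rcases List.mem_singleton.mp hs with rfl
            exact hE
        have hlenm' : m'.length = m₂.length + 1 := by
          simp [hm', List.length_append]
        obtain ⟨W', hrW', hvW', heW', hlW', hclW'⟩ :=
          ih m' hrm' hvm' (by omega)
        have hncm' : ¬ CanPull Γ v m' := by
          intro hc
          rcases canPull_append.mp hc with hc | ⟨hall, -⟩
          exacts [hncm₂ hc, hNAA₂ hall]
        have hncW' : ¬ CanPull Γ v W' := fun hc => hncm' (hclW' v hc)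
        have hletsm' : lets m' = insert v (lets m₂) := by
          rw [hm', lets_append, lets_singleton, Set.union_singleton]
        have hblW' : ∃ b ∈ lets W', ¬ Γ.Adj b v := by
          rw [hlW', hletsm']
          obtain ⟨b, hb, hbv⟩ := hbl₂
          exact ⟨b, Set.mem_insert_iff.mpr (Or.inr hb), hbv⟩
        obtain ⟨Y, hrY, hvY, heY, hlY, hclY⟩ :=
          conj_lemma he0 hrW' hvW' hncW' hblW'
        have hevm' : eval Γ 𝔭 m' = eval Γ 𝔭 m₂ * pw Γ 𝔭 v (f + e) := by
          rw [hm', eval_append, eval_cons, eval_nil, mul_one]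
        have hconj : eval Γ 𝔭 m = pw Γ 𝔭 v e * eval Γ 𝔭 m' * (pw Γ 𝔭 v e)⁻¹ := by
          rw [hevm', hevm, ← pw_neg]
          simp only [mul_assoc, ← pw_add]
          rw [add_neg_cancel_right]
        refine ⟨Y, hrY, hvY, ?_, ?_, ?_⟩
        · rw [heY, heW', hconj, conj_pow_group, pw_neg, mul_assoc]
        · rw [hlY, hlW', hletsm', Set.insert_idem, hletsm]
        · intro u hu
          rcases hclY u hu with rfl | ⟨hadj, hcp⟩
          · exact canPull_of_pull_some hpull
          · rcases canPull_append.mp (hclW' u hcp) with hc | ⟨-, hc⟩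
            · exact hmem_m u hadj hc
            · rcases canPull_single.mp hc
              exact absurd hadj Γ.irrefl
    · by_cases hcl : ∃ v : V, ∃ (e : ZMod (𝔭 v)) (m₁ : Word 𝔭),
          pull Γ v m = some (e, m₁) ∧ AllAdj Γ v m₁
      · -- split off a central letter
        obtain ⟨v, e, m₁, hpull, hAll⟩ := hcl
        have hwm : Weq Γ m (⟨v, e⟩ :: m₁) := pull_weq hpull
        have hr1 : Reduced Γ (⟨v, e⟩ :: m₁) := (weq_reduced hwm).mp hr
        have hrm₁ : Reduced Γ m₁ := (reduced_cons.mp hr1).2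
        obtain ⟨he0, hvm₁⟩ := pull_valid hv hpull
        have hlen1 : m.length = m₁.length + 1 := pull_length hpull
        obtain ⟨W₁, hrW₁, hvW₁, heW₁, hlW₁, hclW₁⟩ :=
          ih m₁ hrm₁ hvm₁ (by omega)
        have hvnot : v ∉ lets W₁ := by
          rw [hlW₁]
          exact allAdj_not_mem hAll
        refine ⟨⟨v, (p : ZMod (𝔭 v)) * e⟩ :: W₁,
          reduced_cons.mpr ⟨not_canPull_of_not_mem hvnot, hrW₁⟩, ?_, ?_, ?_, ?_⟩
        · intro s hs
          rcases List.mem_cons.mp hs with rfl | hs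
          · exact pne hpp hgt v he0
          · exact hvW₁ s hs
        · rw [eval_cons, heW₁, eval_weq hwm, eval_cons,
            (comm_eval hAll e).mul_pow, pw_pow]
        · rw [lets_cons, hlW₁, pull_lets hpull]
        · intro u hu
          rcases (canPull_cons _ _ _).mp hu with rfl | ⟨hadj, hcp⟩
          · exact canPull_of_pull_some hpull
          · refine (weq_canPull hwm u).mpr ?_
            exact (canPull_cons _ _ _).mpr (Or.inr ⟨hadj, hclW₁ u hcp⟩)
      · -- base case : cyclically reduced
        have hnocross : ∀ u, ¬ (BClear Γ u m ∧ CanPull Γ u m) := by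
          rintro u ⟨hbc, hcp⟩
          rcases hep : pull Γ u m with - | ⟨e, m₁⟩
          · exact (pull_none_iff.mp hep) hcp
          obtain ⟨A, B, heqm, heqm₁, hallA⟩ := pull_some_decomp hep
          rw [heqm] at hbc
          rcases bclear_append.mp hbc with ⟨-, hallAB⟩ | hbB
          · exact Γ.irrefl (hallAB ⟨u, e⟩ (List.mem_cons_self))
          · rcases bclear_cons.mp hbB with ⟨-, hallB⟩ | hbB'
            · exact hcl ⟨u, e, m₁, hep, heqm₁ ▸ allAdj_append.mpr ⟨hallA, hallB⟩⟩
            · exact hwrap ⟨u, e, m₁, hep, heqm₁ ▸ bclear_append.mpr (Or.inr hbB')⟩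
        exact ⟨wpow p m, reduced_wpow hr hnocross p, valid_wpow hv,
          eval_wpow p m, lets_wpow hpp.pos.ne', fun u hu => canPull_wpow hu⟩

end mainlemma

end evalsec

end GPaux

theorem stmt_3 {V : Type} (Γ : SimpleGraph V) (𝔭 : V → ℕ)
    (h𝔭 : ∀ v, 𝔭 v = 0 ∨ IsPrimePow (𝔭 v)) (hfin : (Set.range 𝔭).Finite)
    (p : ℕ) (hp : p.Prime) (hgt : ∀ v, 𝔭 v ≠ 0 → 𝔭 v < p)
    (g : GraphProduct Γ 𝔭) :
    GraphProduct.sp g ⊆ GraphProduct.sp (g ^ p) := by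
  intro v hv A hA
  obtain ⟨w, hrw, hvw, hew⟩ := GPaux.exists_reduced_rep (Γ := Γ) (𝔭 := 𝔭) g
  obtain ⟨W, hrW, hvW, heW, hlW, -⟩ :=
    GPaux.cyc (p := p) hp hgt w.length w hrw hvw le_rfl
  obtain ⟨u, hlu, heu⟩ := GPaux.closure_eval hA
  have h1 : GPaux.lets W ⊆ GPaux.lets u :=
    GPaux.lets_reduced_min hrW hvW (by rw [heW, hew, heu])
  have h2 : GPaux.lets w ⊆ A := by
    rw [← hlW]
    exact h1.trans hlu
  have h3 : g ∈ Subgroup.closure (GraphProduct.of '' A) := by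
    rw [← hew]
    exact GPaux.eval_mem_closure h2
  exact hv A h3
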